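/- Let 0 < p < 1, q = 1 - p, and consider the random walk strongly reflected at the origin: S_0 = 0 and S_j = |S_{j-1} + X_j| for j ≥ 1, with M_n = max_{0≤j≤n} S_j. Then for every real λ with |λ| < 1, the series Σ_{n=1}^∞ λ^n · P{M_n = 1} converges and equals λ(1 + qλ)/(1 - qλ²). -/

import Mathlib

open Finset Filter

/-- The value `±1` of a single step of the walk, driven by a Boolean. -/
def step (b : Bool) : ℤ := if b then 1 else -1

/-- The probability weight of the path `ω` when `P{Xᵢ = 1} = p`, `P{Xᵢ = -1} = 1 - p`,
independently over `i`. -/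
def wt (p : ℝ) {n : ℕ} (ω : Fin n → Bool) : ℝ :=
  ∏ i, if ω i then p else 1 - p

/-- The probability of an event `A` for a walk of length `n`. -/
noncomputable def prob (p : ℝ) {n : ℕ} (A : Set (Fin n → Bool)) : ℝ :=
  ∑ ω : Fin n → Bool, A.indicator (wt p) ω

/-- The walk strongly reflected at the origin: `S_0 = 0`, `S_{j+1} = |S_j + X_{j+1}|`. -/
def walkStrong {n : ℕ} (ω : Fin n → Bool) : ℕ → ℤ
  | 0 => 0
  | j + 1 => |walkStrong ω j + if h : j < n then step (ω ⟨j, h⟩) else 0|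

/-- The running maximum `M_n = max_{0 ≤ j ≤ n} S_j` of the strongly reflected walk. -/
def mStrong {n : ℕ} (ω : Fin n → Bool) : ℤ :=
  (Finset.range (n + 1)).sup' (by simp) (walkStrong ω)

lemma walk_good {n : ℕ} (ω : Fin n → Bool)
    (hω : ∀ i : Fin n, i.val % 2 = 1 → ω i = false) :
    ∀ j, j ≤ n → walkStrong ω j = ((j % 2 : ℕ) : ℤ) := by
  intro j
  induction j with
  | zero => intro _; simp [walkStrong]
  | succ j ih =>
    intro hj
    have hjn : j < n := hj
    rw [walkStrong, dif_pos hjn, ih (le_of_lt hjn)]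
    rcases Nat.even_or_odd j with he | ho
    · have h2 : j % 2 = 0 := Nat.even_iff.mp he
      have h2' : (j + 1) % 2 = 1 := by omega
      rw [h2, h2']
      cases hb : ω ⟨j, hjn⟩ <;> simp [step, hb]
    · have h2 : j % 2 = 1 := Nat.odd_iff.mp ho
      have h2' : (j + 1) % 2 = 0 := by omega
      have hb : ω ⟨j, hjn⟩ = false := hω ⟨j, hjn⟩ h2
      rw [h2, h2', hb]
      simp [step]

lemma key {n : ℕ} (ω : Fin n → Bool) (H : ∀ j, j ≤ n → walkStrong ω j ≤ 1) :
    ∀ j, j ≤ n →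
      (∀ i : Fin n, i.val < j → i.val % 2 = 1 → ω i = false) ∧
        walkStrong ω j = ((j % 2 : ℕ) : ℤ) := by
  intro j
  induction j with
  | zero => intro _; exact ⟨fun i hi _ => absurd hi (Nat.not_lt_zero _), by simp [walkStrong]⟩
  | succ j ih =>
    intro hj
    have hjn : j < n := hj
    obtain ⟨hc, hv⟩ := ih (le_of_lt hjn)
    rcases Nat.even_or_odd j with he | ho
    · have h2 : j % 2 = 0 := Nat.even_iff.mp he
      have h2' : (j + 1) % 2 = 1 := by omega
      refine ⟨fun i hi hodd => ?_, ?_⟩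
      · rcases Nat.lt_succ_iff_lt_or_eq.mp hi with h | h
        · exact hc i h hodd
        · omega
      · rw [walkStrong, dif_pos hjn, hv, h2, h2']
        cases hb : ω ⟨j, hjn⟩ <;> simp [step, hb]
    · have h2 : j % 2 = 1 := Nat.odd_iff.mp ho
      have h2' : (j + 1) % 2 = 0 := by omega
      have hb : ω ⟨j, hjn⟩ = false := by
        by_contra hb
        have hb' : ω ⟨j, hjn⟩ = true := by simpa using hb
        have := H (j + 1) hj
        rw [walkStrong, dif_pos hjn, hv, h2, hb'] at this
        simp [step] at this
      refine ⟨fun i hi hodd => ?_, ?_⟩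
      · rcases Nat.lt_succ_iff_lt_or_eq.mp hi with h | h
        · exact hc i h hodd
        · have : i = ⟨j, hjn⟩ := Fin.ext h
          rw [this]; exact hb
      · rw [walkStrong, dif_pos hjn, hv, h2, h2', hb]
        simp [step]

lemma event_eq {n : ℕ} (ω : Fin (n + 1) → Bool) :
    mStrong ω = 1 ↔ ∀ i : Fin (n + 1), i.val % 2 = 1 → ω i = false := by
  constructor
  · intro h
    have H : ∀ j, j ≤ n + 1 → walkStrong ω j ≤ 1 := by
      intro j hj
      calc walkStrong ω j ≤ mStrong ω :=
            Finset.le_sup' _ (Finset.mem_range.mpr (Nat.lt_succ_of_le hj))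
        _ = 1 := h
    intro i hodd
    exact (key ω H (n + 1) le_rfl).1 i i.isLt hodd
  · intro hω
    have hw := walk_good ω hω
    apply le_antisymm
    · apply Finset.sup'_le
      intro j hj
      rw [hw j (Nat.lt_succ_iff.mp (Finset.mem_range.mp hj))]
      have := Nat.mod_lt j (show 0 < 2 by norm_num)
      omega
    · have h1 : walkStrong ω 1 = 1 := by
        rw [hw 1 (by omega)]; norm_num
      calc (1 : ℤ) = walkStrong ω 1 := h1.symm
        _ ≤ mStrong ω := Finset.le_sup' _ (Finset.mem_range.mpr (by omega))

lemma card_odd (m : ℕ) :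
    ((Finset.univ : Finset (Fin m)).filter (fun i => i.val % 2 = 1)).card = m / 2 := by
  rw [Finset.card_filter]
  rw [Fin.sum_univ_eq_sum_range (fun i => if i % 2 = 1 then 1 else 0)]
  induction m with
  | zero => simp
  | succ m ih =>
    rw [Finset.sum_range_succ, ih]
    rcases Nat.even_or_odd m with he | ho
    · have := Nat.even_iff.mp he; rw [if_neg (by omega)]; omega
    · have := Nat.odd_iff.mp ho; rw [if_pos this]; omega

lemma prob_eq (p : ℝ) (n : ℕ) :
    prob p {ω : Fin (n + 1) → Bool | mStrong ω = 1} = (1 - p) ^ ((n + 1) / 2) := by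
  classical
  unfold prob
  have hind : ∀ ω : Fin (n + 1) → Bool,
      ({ω : Fin (n + 1) → Bool | mStrong ω = 1}).indicator (wt p) ω =
        ∏ i : Fin (n + 1),
          (if i.val % 2 = 1 ∧ ω i = true then 0 else if ω i then p else 1 - p) := by
    intro ω
    rw [Set.indicator_apply]
    by_cases h : ω ∈ {ω : Fin (n + 1) → Bool | mStrong ω = 1}
    · rw [if_pos h]
      have hgood : ∀ i : Fin (n + 1), i.val % 2 = 1 → ω i = false :=
        (event_eq ω).mp h
      unfold wt
      apply Finset.prod_congr rfl
      intro i _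
      have hcond : ¬(i.val % 2 = 1 ∧ ω i = true) := by
        rintro ⟨h1, h2⟩
        rw [hgood i h1] at h2
        exact Bool.false_ne_true h2
      rw [if_neg hcond]
    · rw [if_neg h]
      have : ¬ ∀ i : Fin (n + 1), i.val % 2 = 1 → ω i = false := by
        intro hc; exact h ((event_eq ω).mpr hc)
      push_neg at this
      obtain ⟨i, h1, h2⟩ := this
      refine (Finset.prod_eq_zero (Finset.mem_univ i) ?_).symm
      rw [if_pos ⟨h1, by simpa using h2⟩]
  rw [Finset.sum_congr rfl (fun ω _ => hind ω)]
  rw [← Fintype.prod_sum (fun (i : Fin (n + 1)) (b : Bool) =>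
    if i.val % 2 = 1 ∧ b = true then 0 else if b then p else 1 - p)]
  have hsum : ∀ i : Fin (n + 1),
      (∑ b : Bool, if i.val % 2 = 1 ∧ b = true then 0 else if b then p else 1 - p) =
        if i.val % 2 = 1 then 1 - p else 1 := by
    intro i
    rw [Fintype.sum_bool]
    by_cases h : i.val % 2 = 1
    · simp [h]
    · simp [h]
  rw [Finset.prod_congr rfl (fun i _ => hsum i), Finset.prod_ite, Finset.prod_const,
    Finset.prod_const, one_pow, mul_one, card_odd]

theorem statement10 (p : ℝ) (hp0 : 0 < p) (hp1 : p < 1) (l : ℝ) (hl : |l| < 1) :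
    HasSum (fun n : ℕ => l ^ (n + 1) * prob p {ω : Fin (n + 1) → Bool | mStrong ω = 1})
      (l * (1 + (1 - p) * l) / (1 - (1 - p) * l ^ 2)) := by
  have hq0 : 0 ≤ 1 - p := by linarith
  have hq1 : 1 - p < 1 := by linarith
  have hla : 0 ≤ |l| := abs_nonneg l
  have hr : |(1 - p) * l ^ 2| < 1 := by
    rw [abs_mul, abs_of_nonneg hq0, abs_pow]
    nlinarith
  have hgeo := hasSum_geometric_of_abs_lt_one hr
  have hne : (1 : ℝ) - (1 - p) * l ^ 2 ≠ 0 := by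
    intro h
    have h1 : (1 - p) * l ^ 2 = 1 := by linarith
    have : |(1 - p) * l ^ 2| = 1 := by rw [h1]; simp
    linarith
  have hf : (fun n : ℕ => l ^ (n + 1) * prob p {ω : Fin (n + 1) → Bool | mStrong ω = 1}) =
      fun n : ℕ => l ^ (n + 1) * (1 - p) ^ ((n + 1) / 2) := by
    funext n; rw [prob_eq]
  rw [hf]
  have heven : HasSum (fun k : ℕ => l ^ (2 * k + 1) * (1 - p) ^ ((2 * k + 1) / 2))
      (l * (1 - (1 - p) * l ^ 2)⁻¹) := by
    have h := hgeo.mul_left l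
    convert h using 2 with k
    · rfl
    rw [show (2 * k + 1) / 2 = k by omega, pow_succ', pow_mul, mul_pow]
    ring
  have hodd : HasSum (fun k : ℕ => l ^ (2 * k + 1 + 1) * (1 - p) ^ ((2 * k + 1 + 1) / 2))
      ((1 - p) * l ^ 2 * (1 - (1 - p) * l ^ 2)⁻¹) := by
    have h := hgeo.mul_left ((1 - p) * l ^ 2)
    convert h using 2 with k
    · rfl
    rw [show (2 * k + 1 + 1) / 2 = k + 1 by omega, pow_succ, pow_succ, pow_mul, mul_pow,
      pow_succ]
    ring
  have hval : l * (1 + (1 - p) * l) / (1 - (1 - p) * l ^ 2) =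
      l * (1 - (1 - p) * l ^ 2)⁻¹ + (1 - p) * l ^ 2 * (1 - (1 - p) * l ^ 2)⁻¹ := by
    field_simp
  rw [hval]
  exact HasSum.even_add_odd heven hodd
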